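/- Let α be a positive even integer and n = α+3. Define ψ_p(x) = sign(x)|x|^p and the n×n matrix A_n with entries cos((i−j)π/n). Then the vector (1,−1,1,…,1) is an eigenvector of the matrix ψ_p[A_n] = (ψ_p((A_n)_{ij})) with eigenvalue f(p) = 1 + 2 Σ_{j=1}^{α/2+1} (−1)^j cos(jπ/n)^p. -/

import Mathlib

/-- The odd power function `ψ_p(x) = sign(x)|x|^p`. -/
noncomputable def psiPow (p x : ℝ) : ℝ := Real.sign x * |x| ^ p


noncomputable def gfun (p : ℝ) (n : ℕ) (k : ℤ) : ℝ :=
  (-1 : ℝ) ^ k * psiPow p (Real.cos ((k : ℝ) * Real.pi / (n : ℝ)))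

lemma psiPow_neg (p x : ℝ) : psiPow p (-x) = - psiPow p x := by
  unfold psiPow
  rw [Real.sign_neg, abs_neg]; ring

lemma psiPow_of_pos {x : ℝ} (hx : 0 < x) (p : ℝ) : psiPow p x = x ^ p := by
  unfold psiPow
  rw [Real.sign_of_pos hx, abs_of_pos hx, one_mul]

lemma psiPow_one (p : ℝ) : psiPow p 1 = 1 := by
  rw [psiPow_of_pos one_pos, Real.one_rpow]

lemma neg_one_pow_inv (j : ℕ) : ((-1 : ℝ) ^ j)⁻¹ = (-1) ^ j := by
  rcases Nat.even_or_odd j with h | h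
  · rw [h.neg_one_pow]; norm_num
  · rw [h.neg_one_pow]; norm_num

lemma neg_one_zpow_inv (k : ℤ) : ((-1 : ℝ) ^ k)⁻¹ = (-1) ^ k := by
  rcases Int.even_or_odd k with h | h
  · rw [h.neg_one_zpow]; norm_num
  · rw [h.neg_one_zpow]; norm_num

lemma gfun_even (p : ℝ) (n : ℕ) (k : ℤ) : gfun p n (-k) = gfun p n k := by
  unfold gfun
  rw [zpow_neg, neg_one_zpow_inv]
  push_cast
  rw [neg_mul, neg_div, Real.cos_neg]

lemma gfun_period (p : ℝ) {n : ℕ} (hn : Odd n) (hn0 : 0 < n) (k : ℤ) :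
    gfun p n (k + n) = gfun p n k := by
  unfold gfun
  have hne : (n : ℝ) ≠ 0 := by positivity
  have h1 : (((k + (n:ℤ)) : ℤ) : ℝ) * Real.pi / n = (k:ℝ) * Real.pi / n + Real.pi := by
    push_cast
    field_simp
  rw [h1, Real.cos_add_pi, psiPow_neg]
  rw [zpow_add₀ (by norm_num : (-1:ℝ) ≠ 0), zpow_natCast, hn.neg_one_pow]
  ring

lemma gfun_add_mul (p : ℝ) {n : ℕ} (hn : Odd n) (hn0 : 0 < n) (t k : ℤ) :
    gfun p n (k + t * n) = gfun p n k := by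
  induction t using Int.induction_on with
  | zero => simp
  | succ m ih =>
    rw [show k + ((m:ℤ) + 1) * n = (k + m * n) + n by ring, gfun_period p hn hn0, ih]
  | pred m ih =>
    have h2 := gfun_period p hn hn0 (k + (-(m:ℤ) - 1) * n)
    rw [show k + (-(m:ℤ) - 1) * n + n = k + (-(m:ℤ)) * n by ring] at h2
    rw [← h2]
    exact ih

lemma gfun_mod (p : ℝ) {n : ℕ} (hn : Odd n) (hn0 : 0 < n) (k : ℤ) :
    gfun p n (k % n) = gfun p n k := by
  have h : k % (n:ℤ) = k + (-(k / n)) * n := by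
    rw [Int.emod_def]; ring
  rw [h, gfun_add_mul p hn hn0]

lemma gfun_refl (p : ℝ) {n : ℕ} (hn : Odd n) (hn0 : 0 < n) (k : ℤ) :
    gfun p n (n - k) = gfun p n k := by
  rw [show (n:ℤ) - k = -(k - n) by ring, gfun_even]
  have h := gfun_period p hn hn0 (k - n)
  rw [show k - (n:ℤ) + n = k by ring] at h
  exact h.symm

lemma sum_gfun_shift (p : ℝ) {n : ℕ} (hn : Odd n) (hn0 : 0 < n) (c : ℤ) :
    ∑ j : Fin n, gfun p n (c - (j:ℕ)) = ∑ k : Fin n, gfun p n ((k:ℕ)) := by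
  have hnz : (n:ℤ) ≠ 0 := by exact_mod_cast hn0.ne'
  have hpz : (0:ℤ) < n := by exact_mod_cast hn0
  let e : Fin n → Fin n := fun j => ⟨((c - (j:ℕ)) % n).toNat, by
    have h1 : 0 ≤ (c - ((j:ℕ):ℤ)) % (n:ℤ) := Int.emod_nonneg _ hnz
    have h2 : (c - ((j:ℕ):ℤ)) % (n:ℤ) < n := Int.emod_lt_of_pos _ hpz
    omega⟩
  have key : ∀ j : Fin n, e (e j) = j := by
    intro j
    ext
    show ((c - (((((c - (j:ℕ)) % n).toNat : ℕ)) : ℤ)) % n).toNat = (j:ℕ)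
    have h1 : 0 ≤ (c - ((j:ℕ):ℤ)) % (n:ℤ) := Int.emod_nonneg _ hnz
    rw [Int.toNat_of_nonneg h1]
    have h3 : (c - (c - ((j:ℕ):ℤ)) % (n:ℤ)) % n = ((j:ℕ) : ℤ) % n := by
      rw [Int.sub_emod, Int.emod_emod_of_dvd _ dvd_rfl, ← Int.sub_emod,
        show c - (c - ((j:ℕ):ℤ)) = ((j:ℕ):ℤ) by ring]
    rw [h3, Int.emod_eq_of_lt (by positivity) (by exact_mod_cast j.isLt)]
    simp
  refine Fintype.sum_equiv ⟨e, e, key, key⟩ _ _ ?_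
  intro j
  show gfun p n (c - (j:ℕ)) = gfun p n ((((c - (j:ℕ)) % n).toNat : ℕ) : ℤ)
  rw [Int.toNat_of_nonneg (Int.emod_nonneg _ hnz)]
  exact (gfun_mod p hn hn0 _).symm

lemma gfun_zero (p : ℝ) (n : ℕ) : gfun p n 0 = 1 := by
  unfold gfun
  norm_num [psiPow_one]

lemma sum_gfun_eval (p : ℝ) (hp : 0 < p) (a : ℕ) (ha : Even a) :
    ∑ k : Fin (a+3), gfun p (a+3) ((k:ℕ)) =
      1 + 2 * ∑ j ∈ Finset.Icc 1 (a/2+1),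
        (-1:ℝ)^j * Real.cos ((j:ℝ) * Real.pi / ((a:ℝ)+3)) ^ p := by
  obtain ⟨b, hb⟩ := ha
  subst hb
  have hodd : Odd (b + b + 3) := ⟨b+1, by ring⟩
  have hn0 : 0 < b + b + 3 := by omega
  have hhalf : (b + b) / 2 + 1 = b + 1 := by omega
  rw [Fin.sum_univ_eq_sum_range (fun k : ℕ => gfun p (b+b+3) k), Finset.range_eq_Ico,
    Finset.sum_eq_sum_Ico_succ_bot (by omega)]
  have hsplit := Finset.sum_Ico_consecutive (fun k : ℕ => gfun p (b+b+3) k)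
    (show 1 ≤ b+2 by omega) (show b+2 ≤ b+b+3 by omega)
  rw [← hsplit]
  have hrefl : ∑ k ∈ Finset.Ico (b+2) (b+b+3), gfun p (b+b+3) ((k:ℕ)) =
      ∑ k ∈ Finset.Ico 1 (b+2), gfun p (b+b+3) ((k:ℕ)) := by
    refine Finset.sum_nbij' (fun k => b+b+3-k) (fun k => b+b+3-k) ?_ ?_ ?_ ?_ ?_
    · intro k hk; simp only [Finset.mem_Ico] at *; omega
    · intro k hk; simp only [Finset.mem_Ico] at *; omega
    · intro k hk; simp only [Finset.mem_Ico] at *; omega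
    · intro k hk; simp only [Finset.mem_Ico] at *; omega
    · intro k hk
      simp only [Finset.mem_Ico] at hk
      rw [show (((b+b+3-k : ℕ)) : ℤ) = ((b+b+3 : ℕ):ℤ) - k by omega]
      exact (gfun_refl p hodd hn0 _).symm
  rw [hrefl, Nat.cast_zero, gfun_zero]
  have heval : ∀ k ∈ Finset.Ico 1 (b+2), gfun p (b+b+3) ((k:ℕ)) =
      (-1:ℝ)^k * Real.cos ((k:ℝ) * Real.pi / (((b+b:ℕ):ℝ)+3)) ^ p := by
    intro k hk
    simp only [Finset.mem_Ico] at hk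
    unfold gfun
    have hπ := Real.pi_pos
    have hk1 : (1:ℝ) ≤ k := by exact_mod_cast hk.1
    have hk2 : (k:ℝ) ≤ b + 1 := by
      have : k ≤ b + 1 := by omega
      exact_mod_cast this
    have harg : ((k:ℤ):ℝ) * Real.pi / ((b+b+3 : ℕ):ℝ) = (k:ℝ) * Real.pi / (((b+b:ℕ):ℝ)+3) := by
      push_cast; ring
    rw [harg]
    have hb3 : (0:ℝ) < ((b+b:ℕ):ℝ)+3 := by positivity
    have hlt : (k:ℝ) * Real.pi / (((b+b:ℕ):ℝ)+3) < Real.pi / 2 := by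
      rw [div_lt_div_iff₀ hb3 two_pos]
      have hbb : ((b+b:ℕ):ℝ) = (b:ℝ) + b := by push_cast; ring
      nlinarith [hπ, hk2]
    have hge : (0:ℝ) < (k:ℝ) * Real.pi / (((b+b:ℕ):ℝ)+3) := by positivity
    have hcos : 0 < Real.cos ((k:ℝ) * Real.pi / (((b+b:ℕ):ℝ)+3)) := by
      apply Real.cos_pos_of_mem_Ioo
      constructor
      · linarith
      · exact hlt
    rw [psiPow_of_pos hcos, zpow_natCast]
  rw [Finset.sum_congr rfl heval]
  have hIc : Finset.Ico 1 (b+2) = Finset.Icc 1 ((b+b)/2+1) := by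
    rw [hhalf, show b + 2 = b + 1 + 1 from rfl, Finset.Ico_add_one_right_eq_Icc]
  rw [hIc]
  push_cast
  ring

/-- For a positive even integer `α` and `n = α + 3`, the vector `(1,-1,1,…,1)` is an
eigenvector of `ψ_p[A_n]` with eigenvalue `1 + 2∑_{j=1}^{α/2+1} (-1)^j cos(jπ/n)^p`. -/
theorem stmt6 (a : ℕ) (ha : Even a) (hpos : 0 < a) (p : ℝ) (hp : 0 < p) :
    (Matrix.of fun i j : Fin (a + 3) =>
        psiPow p (Real.cos ((((i : ℕ) : ℝ) - ((j : ℕ) : ℝ)) * Real.pi / ((a : ℝ) + 3)))).mulVec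
      (fun i => (-1 : ℝ) ^ (i : ℕ)) =
    (1 + 2 * ∑ j ∈ Finset.Icc 1 (a / 2 + 1),
        (-1 : ℝ) ^ j * Real.cos ((j : ℝ) * Real.pi / ((a : ℝ) + 3)) ^ p) •
      (fun i : Fin (a + 3) => (-1 : ℝ) ^ (i : ℕ)) := by
  have hn0 : 0 < a + 3 := by omega
  have hodd : Odd (a + 3) := by obtain ⟨b, hb⟩ := ha; exact ⟨b+1, by omega⟩
  funext i
  simp only [Matrix.mulVec, Matrix.of_apply, dotProduct, Pi.smul_apply, smul_eq_mul]
  have hterm : ∀ j : Fin (a+3),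
      psiPow p (Real.cos ((((i:ℕ):ℝ) - ((j:ℕ):ℝ)) * Real.pi / ((a:ℝ)+3))) * (-1:ℝ)^(j:ℕ)
        = (-1:ℝ)^(i:ℕ) * gfun p (a+3) (((i:ℕ):ℤ) - ((j:ℕ):ℤ)) := by
    intro j
    unfold gfun
    have harg : (((((i:ℕ):ℤ) - ((j:ℕ):ℤ)) : ℤ) : ℝ) * Real.pi / ((a+3:ℕ):ℝ)
        = (((i:ℕ):ℝ) - ((j:ℕ):ℝ)) * Real.pi / ((a:ℝ)+3) := by push_cast; ring
    rw [harg]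
    have hsign : (-1:ℝ) ^ (((i:ℕ):ℤ) - ((j:ℕ):ℤ)) = (-1:ℝ)^(i:ℕ) * (-1:ℝ)^(j:ℕ) := by
      rw [zpow_sub₀ (by norm_num : (-1:ℝ) ≠ 0), zpow_natCast, zpow_natCast,
        div_eq_mul_inv, neg_one_pow_inv]
    rw [hsign]
    have hsq : (-1:ℝ)^(i:ℕ) * (-1:ℝ)^(i:ℕ) = 1 := by
      rw [← pow_add]
      exact Even.neg_one_pow ⟨(i:ℕ), rfl⟩
    calc psiPow p (Real.cos ((((i:ℕ):ℝ) - ((j:ℕ):ℝ)) * Real.pi / ((a:ℝ)+3))) * (-1:ℝ)^(j:ℕ)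
        = ((-1:ℝ)^(i:ℕ) * (-1:ℝ)^(i:ℕ)) *
          (psiPow p (Real.cos ((((i:ℕ):ℝ) - ((j:ℕ):ℝ)) * Real.pi / ((a:ℝ)+3))) * (-1:ℝ)^(j:ℕ)) := by
          rw [hsq, one_mul]
      _ = (-1:ℝ)^(i:ℕ) * ((-1:ℝ)^(i:ℕ) * (-1:ℝ)^(j:ℕ) *
          psiPow p (Real.cos ((((i:ℕ):ℝ) - ((j:ℕ):ℝ)) * Real.pi / ((a:ℝ)+3)))) := by ring
  rw [Finset.sum_congr rfl (fun j _ => hterm j), ← Finset.mul_sum,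
    sum_gfun_shift p hodd hn0 ((i:ℕ):ℤ), sum_gfun_eval p hp a ha]
  ring
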